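/- Let m(n) be integers with n/4 ≤ m(n) ≤ n/4+1 and let s(n) = -ln(n)/ln(P(n,m(n))), where P(n,m) = sin(π/n)/(2·cos((m-1)π/n)·sin(mπ/n)). Then s(n) → 1 as n → ∞. -/

import Mathlib

open Real

/-- Contraction ratio of the Sierpinski n-gon built from a {n/m} star-polygon. -/
noncomputable def P (n m : ℕ) : ℝ :=
  Real.sin (π / n) / (2 * Real.cos (((m : ℝ) - 1) * π / n) * Real.sin ((m : ℝ) * π / n))

lemma aux_mn (m : ℕ → ℕ)
    (hm : ∀ n : ℕ, (n : ℝ) / 4 ≤ (m n : ℝ) ∧ (m n : ℝ) ≤ (n : ℝ) / 4 + 1) :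
    Filter.Tendsto (fun n : ℕ => (m n : ℝ) / n) Filter.atTop (nhds (1 / 4)) := by
  have hup : Filter.Tendsto (fun n : ℕ => 1 / 4 + 1 / (n : ℝ)) Filter.atTop (nhds (1 / 4)) := by
    have : Filter.Tendsto (fun n : ℕ => 1 / (n : ℝ)) Filter.atTop (nhds 0) :=
      tendsto_one_div_atTop_nhds_zero_nat
    simpa using (tendsto_const_nhds (x := (1/4 : ℝ)) (f := Filter.atTop)).add this
  refine tendsto_of_tendsto_of_tendsto_of_le_of_le' tendsto_const_nhds hup ?_ ?_
  · filter_upwards [Filter.eventually_gt_atTop 0] with n hn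
    have hn' : (0 : ℝ) < n := by exact_mod_cast hn
    rw [le_div_iff₀ hn']
    have := (hm n).1
    nlinarith
  · filter_upwards [Filter.eventually_gt_atTop 0] with n hn
    have hn' : (0 : ℝ) < n := by exact_mod_cast hn
    rw [div_le_iff₀ hn']
    have h4 : (1 / 4 + 1 / (n : ℝ)) * n = n / 4 + 1 := by field_simp
    have := (hm n).2
    linarith

lemma aux_sin : Filter.Tendsto (fun n : ℕ => Real.sin (π / n) * n) Filter.atTop (nhds π) := by
  have hslope : Filter.Tendsto (fun x : ℝ => Real.sin x / x) (nhdsWithin 0 {(0:ℝ)}ᶜ)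
      (nhds 1) := by
    have h := (Real.hasDerivAt_sin 0)
    rw [hasDerivAt_iff_tendsto_slope] at h
    simp only [Real.cos_zero] at h
    refine h.congr ?_
    intro x
    simp [slope_def_field]
  have hpin : Filter.Tendsto (fun n : ℕ => π / (n : ℝ)) Filter.atTop
      (nhdsWithin 0 {(0:ℝ)}ᶜ) := by
    rw [tendsto_nhdsWithin_iff]
    constructor
    · exact tendsto_const_nhds.div_atTop tendsto_natCast_atTop_atTop
    · filter_upwards [Filter.eventually_gt_atTop 0] with n hn
      have hn' : (0 : ℝ) < n := by exact_mod_cast hn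
      simp only [Set.mem_compl_iff, Set.mem_singleton_iff]
      positivity
  have h1 : Filter.Tendsto (fun n : ℕ => Real.sin (π / n) / (π / n) * π)
      Filter.atTop (nhds π) := by
    have := (hslope.comp hpin).mul_const π
    simpa using this
  refine h1.congr' ?_
  filter_upwards [Filter.eventually_gt_atTop 0] with n hn
  have hn' : (0 : ℝ) < n := by exact_mod_cast hn
  field_simp

lemma aux_denom (m : ℕ → ℕ)
    (hm : ∀ n : ℕ, (n : ℝ) / 4 ≤ (m n : ℝ) ∧ (m n : ℝ) ≤ (n : ℝ) / 4 + 1) :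
    Filter.Tendsto
      (fun n : ℕ => 2 * Real.cos (((m n : ℝ) - 1) * π / n) * Real.sin ((m n : ℝ) * π / n))
      Filter.atTop (nhds 1) := by
  have hmn := aux_mn m hm
  have harg1 : Filter.Tendsto (fun n : ℕ => ((m n : ℝ) - 1) * π / n) Filter.atTop
      (nhds (π / 4)) := by
    have h1 : Filter.Tendsto (fun n : ℕ => (m n : ℝ) * π / n - π / n) Filter.atTop
        (nhds (π / 4)) := by
      have h2 := hmn.mul_const π
      have h3 : Filter.Tendsto (fun n : ℕ => π / (n : ℝ)) Filter.atTop (nhds 0) :=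
        tendsto_const_nhds.div_atTop tendsto_natCast_atTop_atTop
      have h4 := h2.sub h3
      simp only [div_mul_eq_mul_div] at h4
      rw [show (1:ℝ)*π/4 - 0 = π/4 by ring] at h4
      exact h4
    refine h1.congr' ?_
    filter_upwards [Filter.eventually_gt_atTop 0] with n hn
    have hn' : (0 : ℝ) ≠ n := by exact_mod_cast hn.ne
    field_simp
  have harg2 : Filter.Tendsto (fun n : ℕ => (m n : ℝ) * π / n) Filter.atTop
      (nhds (π / 4)) := by
    have h2 := hmn.mul_const π
    simp only [div_mul_eq_mul_div] at h2
    rw [show (1:ℝ)*π/4 = π/4 by ring] at h2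
    exact h2
  have hc : Filter.Tendsto (fun n : ℕ => Real.cos (((m n : ℝ) - 1) * π / n)) Filter.atTop
      (nhds (Real.sqrt 2 / 2)) := by
    have := (Real.continuous_cos.tendsto (π / 4)).comp harg1
    simpa [Real.cos_pi_div_four, Function.comp_def] using this
  have hs : Filter.Tendsto (fun n : ℕ => Real.sin ((m n : ℝ) * π / n)) Filter.atTop
      (nhds (Real.sqrt 2 / 2)) := by
    have := (Real.continuous_sin.tendsto (π / 4)).comp harg2
    simpa [Real.sin_pi_div_four, Function.comp_def] using this
  have := ((tendsto_const_nhds (x := (2:ℝ)) (f := Filter.atTop)).mul hc).mul hs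
  have h2 : (2 : ℝ) * (Real.sqrt 2 / 2) * (Real.sqrt 2 / 2) = 1 := by
    have : Real.sqrt 2 * Real.sqrt 2 = 2 := Real.mul_self_sqrt (by norm_num)
    nlinarith
  rwa [h2] at this

lemma aux_nP (m : ℕ → ℕ)
    (hm : ∀ n : ℕ, (n : ℝ) / 4 ≤ (m n : ℝ) ∧ (m n : ℝ) ≤ (n : ℝ) / 4 + 1) :
    Filter.Tendsto (fun n : ℕ => (n : ℝ) * P n (m n)) Filter.atTop (nhds π) := by
  have h := (aux_sin).div (aux_denom m hm) one_ne_zero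
  rw [div_one] at h
  refine h.congr ?_
  intro n
  simp only [Pi.div_apply, P]
  rw [← mul_div_assoc, mul_comm]

theorem dim_tendsto_one (m : ℕ → ℕ)
    (hm : ∀ n : ℕ, (n : ℝ) / 4 ≤ (m n : ℝ) ∧ (m n : ℝ) ≤ (n : ℝ) / 4 + 1) :
    Filter.Tendsto (fun n : ℕ => -Real.log n / Real.log (P n (m n)))
      Filter.atTop (nhds 1) := by
  have hnP := aux_nP m hm
  have hpos : ∀ᶠ n : ℕ in Filter.atTop, 0 < (n : ℝ) * P n (m n) :=
    hnP.eventually (eventually_gt_nhds Real.pi_pos)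
  -- L n = log (n * P) / log n → 0
  have hL : Filter.Tendsto (fun n : ℕ => Real.log ((n : ℝ) * P n (m n)) / Real.log n)
      Filter.atTop (nhds 0) := by
    have hlogtop : Filter.Tendsto (fun n : ℕ => Real.log (n : ℝ)) Filter.atTop Filter.atTop :=
      Real.tendsto_log_atTop.comp tendsto_natCast_atTop_atTop
    have hlognum : Filter.Tendsto (fun n : ℕ => Real.log ((n : ℝ) * P n (m n)))
        Filter.atTop (nhds (Real.log π)) :=
      ((Real.continuousAt_log Real.pi_pos.ne').tendsto).comp hnP
    exact hlognum.div_atTop hlogtop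
  have hsub : Filter.Tendsto (fun n : ℕ =>
      1 - Real.log ((n : ℝ) * P n (m n)) / Real.log n) Filter.atTop (nhds 1) := by
    simpa using (tendsto_const_nhds (x := (1:ℝ)) (f := Filter.atTop)).sub hL
  have hfinal : Filter.Tendsto (fun n : ℕ =>
      (1 - Real.log ((n : ℝ) * P n (m n)) / Real.log n)⁻¹) Filter.atTop (nhds 1) := by
    simpa using hsub.inv₀ one_ne_zero
  refine hfinal.congr' ?_
  filter_upwards [hpos, Filter.eventually_ge_atTop 2] with n hp hn2
  have hn' : (1 : ℝ) < n := by exact_mod_cast (by omega : 1 < n)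
  have hn0 : (n : ℝ) ≠ 0 := by positivity
  have hlogn : Real.log n ≠ 0 := (Real.log_pos hn').ne'
  have hP0 : P n (m n) ≠ 0 := by
    intro h
    rw [h, mul_zero] at hp
    exact lt_irrefl 0 hp
  have hlogP : Real.log (P n (m n)) = Real.log ((n : ℝ) * P n (m n)) - Real.log n := by
    rw [Real.log_mul hn0 hP0]
    ring
  set a := Real.log (n : ℝ)
  set b := Real.log ((n : ℝ) * P n (m n))
  rw [hlogP]
  have h1 : (1 : ℝ) - b / a = (a - b) / a := by field_simp
  rw [h1, inv_div]
  rw [neg_div, ← div_neg, neg_sub]
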